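/- Let V be a finite-dimensional real inner product space with orthogonal complex structure J and S a symmetric endomorphism with SJ = -JS. If A is an endomorphism whose symmetric part equals J∘B for a symmetric endomorphism B anticommuting with J, and whose skew-symmetric part equals -2JS², then tr(A²) = tr(B²) - 4·tr(S⁴). -/

import Mathlib

/-- If `S` is symmetric and anticommutes with `J`, `B` is symmetric and
anticommutes with `J`, and `A = JB - 2JS²` (so that the symmetric part of `A` is `JB` and
its skew-symmetric part is `-2JS²`), then `tr(A²) = tr(B²) - 4 tr(S⁴)`. -/
theorem stmt4 {V : Type*} [NormedAddCommGroup V] [InnerProductSpace ℝ V]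
    [FiniteDimensional ℝ V]
    (J S B A : V →ₗ[ℝ] V)
    (hJ2 : ∀ x, J (J x) = -x)
    (hJorth : ∀ x y, (inner ℝ (J x) (J y) : ℝ) = inner ℝ x y)
    (hS : ∀ x y, (inner ℝ (S x) y : ℝ) = inner ℝ x (S y))
    (hanti : S ∘ₗ J = -(J ∘ₗ S))
    (hB : ∀ x y, (inner ℝ (B x) y : ℝ) = inner ℝ x (B y))
    (hBanti : B ∘ₗ J = -(J ∘ₗ B))
    (hA : A = J ∘ₗ B - (2 : ℝ) • (J ∘ₗ S ∘ₗ S)) :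
    LinearMap.trace ℝ V (A ∘ₗ A)
      = LinearMap.trace ℝ V (B ∘ₗ B) - 4 * LinearMap.trace ℝ V (S ∘ₗ S ∘ₗ S ∘ₗ S) := by
  have hS' : ∀ x, S (J x) = -J (S x) := fun x => by
    have := congrFun (congrArg (fun f => f.toFun) hanti) x
    simpa using this
  have hB' : ∀ x, B (J x) = -J (B x) := fun x => by
    have := congrFun (congrArg (fun f => f.toFun) hBanti) x
    simpa using this
  have hS2 : ∀ x, S (S (J x)) = J (S (S x)) := fun x => by
    rw [hS', map_neg, hS', neg_neg]
  have key : A ∘ₗ A = B ∘ₗ B - (4 : ℝ) • (S ∘ₗ S ∘ₗ S ∘ₗ S)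
      - (2 : ℝ) • (B ∘ₗ (S ∘ₗ S)) + (2 : ℝ) • ((S ∘ₗ S) ∘ₗ B) := by
    ext x
    simp only [hA, LinearMap.sub_apply, LinearMap.add_apply, LinearMap.smul_apply,
      LinearMap.comp_apply, map_sub, map_smul, hB', hS', hS2, hJ2, map_neg,
      smul_neg, neg_neg]
    module
  rw [key]
  simp only [map_add, map_sub, map_smul, smul_eq_mul]
  have hc : LinearMap.trace ℝ V (B ∘ₗ (S ∘ₗ S)) = LinearMap.trace ℝ V ((S ∘ₗ S) ∘ₗ B) := by
    rw [← Module.End.mul_eq_comp, ← Module.End.mul_eq_comp, LinearMap.trace_mul_comm]; rfl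
  rw [hc]
  ring
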